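/- Let $\mathfrak{B} \in W^{1,\infty}(\mathbb{R}^d)^d$ be a time-independent vector field with flow $\Phi(t,t_0,x_0)$, let $\Omega \subset \mathbb{R}^d$ be a bounded open set, and let $\mathcal{O} \subset \mathbb{R}^d$ be a nonempty open set. Assume that for every $x_0 \in \overline{\Omega}$ there exists $t < 0$ with $\Phi(t, 0, x_0) \in \mathcal{O}$. Then there exist $T_0 > 0$ and $r_0 > 0$ such that for all $T > T_0$: for every $x_0 \in \overline{\Omega}$ and every $t_0 \in [T_0, T]$ there exists $t \in (t_0 - T_0, t_0)$ such that for all $x \in \overline{B}(x_0, r_0)$ one has $\Phi(t, t_0, x) \in \mathcal{O}$. -/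

import Mathlib

open MeasureTheory Real Set Metric

/-- For an autonomous Lipschitz bounded vector field, if every backward
trajectory starting from `closure Ω` enters the open set `𝒪`, then there are `T0 > 0`
and `r0 > 0` such that for every `T > T0` the flushing condition `(𝓕𝓒)` holds for `𝒪`. -/
theorem stmt_1 {d : ℕ} (B : EuclideanSpace ℝ (Fin d) → EuclideanSpace ℝ (Fin d))
    (K : NNReal) (hBlip : LipschitzWith K B) (Mb : ℝ) (hBbd : ∀ x, ‖B x‖ ≤ Mb)
    (Φ : ℝ → ℝ → EuclideanSpace ℝ (Fin d) → EuclideanSpace ℝ (Fin d))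
    (hinit : ∀ t0 : ℝ, ∀ x0, Φ t0 t0 x0 = x0)
    (hODE : ∀ t0 : ℝ, ∀ x0, ∀ t : ℝ, HasDerivAt (fun τ => Φ τ t0 x0) (B (Φ t t0 x0)) t)
    (hauto : ∀ t t0 : ℝ, ∀ x, Φ t t0 x = Φ (t - t0) 0 x)
    (Ω 𝒪 : Set (EuclideanSpace ℝ (Fin d)))
    (hΩ : IsOpen Ω) (hΩb : Bornology.IsBounded Ω)
    (h𝒪 : IsOpen 𝒪) (h𝒪ne : 𝒪.Nonempty)
    (henter : ∀ x0 ∈ closure Ω, ∃ t < (0:ℝ), Φ t 0 x0 ∈ 𝒪) :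
    ∃ T0 > (0:ℝ), ∃ r0 > (0:ℝ), ∀ T > T0,
      ∀ x0 ∈ closure Ω, ∀ t0 ∈ Set.Icc T0 T,
        ∃ t ∈ Set.Ioo (t0 - T0) t0, ∀ x ∈ Metric.closedBall x0 r0, Φ t t0 x ∈ 𝒪 := by
  -- backward-in-time derivative
  have hder : ∀ (x : EuclideanSpace ℝ (Fin d)) (τ : ℝ),
      HasDerivAt (fun τ : ℝ => Φ (-τ) 0 x) (-B (Φ (-τ) 0 x)) τ := by
    intro x τ
    have h := HasDerivAt.scomp (𝕜 := ℝ) τ (hODE 0 x (-τ)) (hasDerivAt_neg τ)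
    simpa [Function.comp_def, neg_one_smul] using h
  -- Grönwall: backward flow is Lipschitz in the initial point
  have gron : ∀ s ≤ (0:ℝ), ∀ x y, dist (Φ s 0 x) (Φ s 0 y) ≤ dist x y * Real.exp (K * (-s)) := by
    intro s hs x y
    have hcx : ContinuousOn (fun τ : ℝ => Φ (-τ) 0 x) (Icc 0 (-s)) :=
      (continuous_iff_continuousAt.2 fun τ => (hder x τ).continuousAt).continuousOn
    have hcy : ContinuousOn (fun τ : ℝ => Φ (-τ) 0 y) (Icc 0 (-s)) :=
      (continuous_iff_continuousAt.2 fun τ => (hder y τ).continuousAt).continuousOn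
    have h := dist_le_of_trajectories_ODE (v := fun _ z => -B z) (K := K)
      (f := fun τ : ℝ => Φ (-τ) 0 x) (g := fun τ : ℝ => Φ (-τ) 0 y)
      (a := 0) (b := -s) (δ := dist x y)
      (fun _ => hBlip.neg) hcx
      (fun τ _ => (hder x τ).hasDerivWithinAt) hcy
      (fun τ _ => (hder y τ).hasDerivWithinAt)
      (by simp [hinit]) (-s) ⟨by linarith, le_refl _⟩
    simpa using h
  -- local flushing near each point of the closure
  have key : ∀ x0 ∈ closure Ω, ∃ s < (0:ℝ), ∃ ρ > (0:ℝ),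
      ∀ x ∈ closedBall x0 (2 * ρ), Φ s 0 x ∈ 𝒪 := by
    intro x0 hx0
    obtain ⟨s, hs, hmem⟩ := henter x0 hx0
    obtain ⟨ε, hε, hball⟩ := Metric.isOpen_iff.1 h𝒪 _ hmem
    have hC : (0:ℝ) < Real.exp (K * (-s)) := Real.exp_pos _
    refine ⟨s, hs, ε / (4 * Real.exp (K * (-s))), by positivity, fun x hx => ?_⟩
    apply hball
    have h1 : dist (Φ s 0 x) (Φ s 0 x0) ≤ dist x x0 * Real.exp (K * (-s)) :=
      gron s hs.le x x0
    have h2 : dist x x0 ≤ 2 * (ε / (4 * Real.exp (K * (-s)))) := hx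
    have : dist (Φ s 0 x) (Φ s 0 x0) ≤ ε / 2 := by
      calc dist (Φ s 0 x) (Φ s 0 x0) ≤ dist x x0 * Real.exp (K * (-s)) := h1
        _ ≤ 2 * (ε / (4 * Real.exp (K * (-s)))) * Real.exp (K * (-s)) := by
            exact mul_le_mul_of_nonneg_right h2 hC.le
        _ = ε / 2 := by field_simp; ring
    exact lt_of_le_of_lt this (by linarith)
  -- trivial case
  rcases eq_empty_or_nonempty (closure Ω) with hcl | hcl
  · exact ⟨1, one_pos, 1, one_pos, fun T _ x0 hx0 => by rw [hcl] at hx0; exact absurd hx0 (notMem_empty _)⟩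
  -- compactness
  choose! sf hsf ρf hρf hBf using fun i : closure Ω => key i i.2
  have hcompact : IsCompact (closure Ω) := Metric.isCompact_of_isClosed_isBounded isClosed_closure hΩb.closure
  have hcov : closure Ω ⊆ ⋃ i : closure Ω, ball (i : EuclideanSpace ℝ (Fin d)) (ρf i) := by
    intro x hx
    exact mem_iUnion.2 ⟨⟨x, hx⟩, mem_ball_self (hρf ⟨x, hx⟩)⟩
  obtain ⟨t, ht⟩ := hcompact.elim_finite_subcover _ (fun i => isOpen_ball) hcov
  have htne : t.Nonempty := by
    obtain ⟨x, hx⟩ := hcl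
    obtain ⟨i, hi, -⟩ := mem_iUnion₂.1 (ht hx)
    exact ⟨i, hi⟩
  set T0 : ℝ := 1 + t.sup' htne (fun i => -sf i) with hT0def
  set r0 : ℝ := t.inf' htne ρf with hr0def
  have hT0pos : (0:ℝ) < T0 := by
    obtain ⟨i, hi⟩ := id htne
    have h1 : -sf i ≤ t.sup' htne (fun i => -sf i) := Finset.le_sup' (f := fun i => -sf i) hi
    have h2 : 0 < -sf i := by linarith [hsf i]
    have : 0 < t.sup' htne (fun i => -sf i) := lt_of_lt_of_le h2 h1
    linarith
  have hr0pos : (0:ℝ) < r0 := by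
    rw [hr0def, Finset.lt_inf'_iff]
    exact fun i _ => hρf i
  refine ⟨T0, hT0pos, r0, hr0pos, fun T hT x0 hx0 t0 ht0 => ?_⟩
  obtain ⟨i, hi, hxi⟩ := mem_iUnion₂.1 (ht hx0)
  have hsi : sf i < 0 := hsf i
  have hsiT0 : -sf i < T0 := by
    have : -sf i ≤ t.sup' htne (fun i => -sf i) := Finset.le_sup' (f := fun i => -sf i) hi
    linarith
  refine ⟨t0 + sf i, ⟨by linarith, by linarith⟩, fun x hx => ?_⟩
  rw [hauto]
  have harg : t0 + sf i - t0 = sf i := by ring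
  rw [harg]
  apply hBf i
  have h1 : dist x x0 ≤ r0 := hx
  have h2 : dist x0 (i : EuclideanSpace ℝ (Fin d)) < ρf i := hxi
  have h3 : r0 ≤ ρf i := Finset.inf'_le _ hi
  calc dist x (i : EuclideanSpace ℝ (Fin d)) ≤ dist x x0 + dist x0 _ := dist_triangle _ _ _
    _ ≤ 2 * ρf i := by linarith
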